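/- Let M be a diamond with atoms A, f : M^n → ℝ submodular, a, b ∈ M^n with a ≤ b, and let J = { j ∈ [n] : a(j) ≠ b(j), and not (a(j) = 0 and b(j) = 1) }. Fix z ∈ M^n with z(i) = 0 for all i outside I = { i : a(i) = 0, b(i) = 1 }. For Y = {y_1,...,y_m} ⊆ J define g_z(Y) = f( a[y_1 = b(y_1), ..., y_m = b(y_m)] ⊔ z ). Then g_z is a submodular set function on 2^J: g_z(C) + g_z(D) ≥ g_z(C ∩ D) + g_z(C ∪ D) for all C, D ⊆ J. -/

import Mathlib

set_option linter.unreachableTactic false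
set_option linter.unusedTactic false
set_option linter.unusedVariables false

inductive Dia (A : Type) : Type where
  | bot : Dia A
  | atom : A → Dia A
  | top : Dia A
  deriving DecidableEq

namespace Dia

variable {A : Type} [DecidableEq A]

instance : Lattice (Dia A) where
  le x y := x = bot ∨ y = top ∨ x = y
  le_refl x := Or.inr (Or.inr rfl)
  le_trans x y z hxy hyz := by
    rcases hxy with h | h | h <;> rcases hyz with h' | h' | h' <;> simp_all
  le_antisymm x y hxy hyx := by
    rcases hxy with h | h | h <;> rcases hyx with h' | h' | h' <;> simp_all
  sup x y := if x = bot then y else if y = bot then x else if x = y then x else top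
  inf x y := if x = top then y else if y = top then x else if x = y then x else bot
  le_sup_left x y := by
    try dsimp only
    split_ifs <;> (try simp_all) <;> (try split_ifs) <;> (try simp_all)
  le_sup_right x y := by
    try dsimp only
    split_ifs <;> (try simp_all) <;> (try split_ifs) <;> (try simp_all)
  sup_le x y z hxz hyz := by
    try dsimp only
    rcases hxz with h | h | h <;> rcases hyz with h' | h' | h' <;> split_ifs <;> (try simp_all) <;> (try split_ifs) <;> (try simp_all)
  inf_le_left x y := by
    try dsimp only
    split_ifs <;> (try simp_all) <;> (try split_ifs) <;> (try simp_all)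
  inf_le_right x y := by
    try dsimp only
    split_ifs <;> (try simp_all) <;> (try split_ifs) <;> (try simp_all)
  le_inf x y z hxy hxz := by
    try dsimp only
    rcases hxy with h | h | h <;> rcases hxz with h' | h' | h' <;> split_ifs <;> (try simp_all) <;> (try split_ifs) <;> (try simp_all)

instance : BoundedOrder (Dia A) where
  top := top
  bot := bot
  le_top x := Or.inr (Or.inl rfl)
  bot_le x := Or.inl rfl

def drank : Dia A → ℕ
  | bot => 0
  | atom _ => 1
  | top => 2

noncomputable def gval (v : A → ℝ) : Dia A → ℝ
  | bot => 0
  | atom a => v a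
  | top => sSup {r : ℝ | ∃ a a' : A, a ≠ a' ∧ r = v a + v a'}

end Dia

variable {A : Type} [DecidableEq A] {n : ℕ}

noncomputable def evalD (x : Fin n → A → ℝ) (y : Fin n → Dia A) : ℝ :=
  ∑ i, Dia.gval (x i) (y i)

def Submod (f : (Fin n → Dia A) → ℝ) : Prop :=
  ∀ a b, f (a ⊓ b) + f (a ⊔ b) ≤ f a + f b

def InP (f : (Fin n → Dia A) → ℝ) (x : Fin n → A → ℝ) : Prop :=
  ∀ y, evalD x y ≤ f y

def UnifiedRow (v : A → ℝ) : Prop :=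
  ∃ p : A, (∀ a b : A, a ≠ p → b ≠ p → v a = v b) ∧ ∀ a, v a ≤ v p

def Unified (x : Fin n → A → ℝ) : Prop := ∀ i, UnifiedRow (x i)


/-- The tuple obtained from `a` by replacing the coordinates in `Y` by the
corresponding values of `b`, joined with `z`. -/
def tupOf (a b z : Fin n → Dia A) (Y : Finset (Fin n)) : Fin n → Dia A :=
  (fun j => if j ∈ Y then b j else a j) ⊔ z


/-- g_z(Y) = f(a[Y := b] ⊔ z) is a submodular set function. -/
theorem stmt15 [Fintype A] (hA : 3 ≤ Fintype.card A)
    (f : (Fin n → Dia A) → ℝ) (hf : Submod f)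
    (a b : Fin n → Dia A) (hab : a ≤ b)
    (z : Fin n → Dia A)
    (hz : ∀ i : Fin n, ¬(a i = Dia.bot ∧ b i = Dia.top) → z i = Dia.bot)
    (C D : Finset (Fin n))
    (hC : ∀ j ∈ C, a j ≠ b j ∧ ¬(a j = Dia.bot ∧ b j = Dia.top))
    (hD : ∀ j ∈ D, a j ≠ b j ∧ ¬(a j = Dia.bot ∧ b j = Dia.top)) :
    f (tupOf a b z (C ∩ D)) + f (tupOf a b z (C ∪ D)) ≤
      f (tupOf a b z C) + f (tupOf a b z D) := by
  have key1 : tupOf a b z C ⊓ tupOf a b z D = tupOf a b z (C ∩ D) := by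
    funext j
    have habj : a j ≤ b j := hab j
    simp only [tupOf, Pi.inf_apply, Pi.sup_apply, Finset.mem_inter]
    by_cases hjC : j ∈ C <;> by_cases hjD : j ∈ D <;> simp [hjC, hjD]
    · exact le_sup_of_le_left habj
    · exact le_sup_of_le_left habj
  have key2 : tupOf a b z C ⊔ tupOf a b z D = tupOf a b z (C ∪ D) := by
    funext j
    have habj : a j ≤ b j := hab j
    simp only [tupOf, Pi.sup_apply, Finset.mem_union]
    by_cases hjC : j ∈ C <;> by_cases hjD : j ∈ D <;> simp [hjC, hjD]
    · exact le_sup_of_le_left habj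
    · exact le_sup_of_le_left habj
  have h := hf (tupOf a b z C) (tupOf a b z D)
  rwa [key1, key2] at h
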